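/- Let (Ω, μ) be a probability space and u : Ω → ℝ measurable with u > 0 μ-almost everywhere, and let α > 1 be real with exp((α − 1)·u) integrable. Define g_m(x) = (1/2)·E[u·exp(−u·|x − m|)] for m ∈ {0, 1} and M(t) = E[exp(t·u)]. Then ∫_ℝ g_0(x)^α · g_1(x)^{1−α} dx ≤ ( α·M(α − 1) + (α − 1)·M(−α) ) / (2α − 1). Consequently, the R²DP Laplace mechanism applied to a query of sensitivity 1 satisfies (α, ε)-Rényi differential privacy with ε = (1/(α − 1))·ln( ( α·M(α − 1) + (α − 1)·M(−α) ) / (2α − 1) ). -/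

import Mathlib

open MeasureTheory Real
open Set

section r2dpAux

lemma r2dp_expIoi {v : ℝ} (hv : 0 < v) (a : ℝ) :
    ∫ x in Ioi a, exp (-(v * x)) = exp (-(v * a)) / v := by
  have := integral_comp_mul_left_Ioi (fun y => exp (-y)) a hv
  simp only [smul_eq_mul] at this
  rw [this, integral_exp_neg_Ioi]
  ring

lemma r2dp_expIic {v : ℝ} (hv : 0 < v) (a : ℝ) :
    ∫ x in Iic a, exp (v * x) = exp (v * a) / v := by
  have := integral_comp_neg_Iic a (fun x => exp (-(v * x)))
  simp only [neg_neg, mul_neg] at this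
  rw [show (fun x => exp (v * x)) = (fun x : ℝ => exp (-(v * -x))) by ext x; ring_nf] at *
  rw [this, r2dp_expIoi hv, mul_neg, neg_neg]

lemma r2dp_intIic {v : ℝ} (hv : 0 < v) (a : ℝ) :
    IntegrableOn (fun x => exp (v * x)) (Iic a) := by
  rw [← Measure.map_neg_eq_self (volume : Measure ℝ)]
  have m : MeasurableEmbedding fun x : ℝ => -x := (Homeomorph.neg ℝ).measurableEmbedding
  have : IntegrableOn ((fun x => exp (v * x)) ∘ (fun x : ℝ => -x))
      ((fun x : ℝ => -x) ⁻¹' (Iic a)) volume := by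
    simp_rw [Function.comp_def, neg_preimage, neg_Iic, mul_neg, ← neg_mul]
    exact Iff.mpr integrableOn_Ici_iff_integrableOn_Ioi (exp_neg_integrableOn_Ioi (-a) hv)
  exact (m.integrableOn_map_iff).mpr this

variable {α v : ℝ} (hα : 1 < α) (hv : 0 < v)

omit hα hv in
lemma r2dp_piece1 (hα : 1 < α) (hv : 0 < v) :
    EqOn (fun x : ℝ => exp (-(v * (α * |x - 0| + (1 - α) * |x - 1|))))
    (fun x => exp (-((1 - α) * v)) * exp (v * x)) (Iic 0) := by
  intro x hx
  simp only [mem_Iic] at hx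
  show exp (-(v * (α * |x - 0| + (1 - α) * |x - 1|))) = _
  rw [sub_zero, abs_of_nonpos hx, abs_of_nonpos (by linarith : x - 1 ≤ 0)]
  simp only [← exp_add]
  ring_nf

omit hα hv in
lemma r2dp_piece2 (hα : 1 < α) (hv : 0 < v) :
    EqOn (fun x : ℝ => exp (-(v * (α * |x - 0| + (1 - α) * |x - 1|))))
    (fun x => exp ((α - 1) * v) * exp (-(v * (2 * α - 1)) * x)) (Ioc 0 1) := by
  intro x hx
  simp only [mem_Ioc] at hx
  show exp (-(v * (α * |x - 0| + (1 - α) * |x - 1|))) = _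
  rw [sub_zero, abs_of_nonneg hx.1.le, abs_of_nonpos (by linarith [hx.2] : x - 1 ≤ 0)]
  simp only [← exp_add]
  ring_nf

omit hα hv in
lemma r2dp_piece3 (hα : 1 < α) (hv : 0 < v) :
    EqOn (fun x : ℝ => exp (-(v * (α * |x - 0| + (1 - α) * |x - 1|))))
    (fun x => exp (-((α - 1) * v)) * exp (-(v * x))) (Ioi 1) := by
  intro x hx
  simp only [mem_Ioi] at hx
  show exp (-(v * (α * |x - 0| + (1 - α) * |x - 1|))) = _
  rw [sub_zero, abs_of_nonneg (by linarith : (0:ℝ) ≤ x),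
    abs_of_nonneg (by linarith : (0:ℝ) ≤ x - 1)]
  simp only [← exp_add]
  ring_nf

include hα hv

lemma r2dp_int1 : IntegrableOn
    (fun x : ℝ => exp (-(v * (α * |x - 0| + (1 - α) * |x - 1|)))) (Iic 0) := by
  have h : IntegrableOn (fun x => exp (-((1 - α) * v)) * exp (v * x)) (Iic 0) volume :=
    (r2dp_intIic hv 0).const_mul _
  exact h.congr_fun (r2dp_piece1 hα hv).symm measurableSet_Iic

lemma r2dp_int2 : IntegrableOn
    (fun x : ℝ => exp (-(v * (α * |x - 0| + (1 - α) * |x - 1|)))) (Ioc 0 1) := by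
  have h : IntegrableOn (fun x => exp ((α - 1) * v) * exp (-(v * (2 * α - 1)) * x))
      (Ioc 0 1) volume := Continuous.integrableOn_Ioc (by continuity)
  exact h.congr_fun (r2dp_piece2 hα hv).symm measurableSet_Ioc

lemma r2dp_int3 : IntegrableOn
    (fun x : ℝ => exp (-(v * (α * |x - 0| + (1 - α) * |x - 1|)))) (Ioi 1) := by
  have h : IntegrableOn (fun x => exp (-((α - 1) * v)) * exp (-(v * x))) (Ioi 1) volume := by
    have := (exp_neg_integrableOn_Ioi 1 hv).const_mul (exp (-((α - 1) * v)))
    simp only [neg_mul] at this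
    exact this
  exact h.congr_fun (r2dp_piece3 hα hv).symm measurableSet_Ioi

lemma r2dp_intAll :
    Integrable (fun x : ℝ => exp (-(v * (α * |x - 0| + (1 - α) * |x - 1|)))) := by
  have h23 : IntegrableOn (fun x : ℝ => exp (-(v * (α * |x - 0| + (1 - α) * |x - 1|))))
      (Ioi 0) := by
    rw [← Ioc_union_Ioi_eq_Ioi (zero_le_one)]
    exact (r2dp_int2 hα hv).union (r2dp_int3 hα hv)
  have := (r2dp_int1 hα hv).union h23
  rwa [Iic_union_Ioi, integrableOn_univ] at this

lemma r2dp_intVal : ∫ x : ℝ, exp (-(v * (α * |x - 0| + (1 - α) * |x - 1|))) =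
    exp ((α - 1) * v) / v + (exp ((α - 1) * v) - exp (-(α * v))) / (v * (2 * α - 1))
      + exp (-(α * v)) / v := by
  have hk : 0 < v * (2 * α - 1) := by nlinarith
  have hsplit23 : (∫ x in Ioi 0, exp (-(v * (α * |x - 0| + (1 - α) * |x - 1|)))) =
      (∫ x in Ioc 0 1, exp (-(v * (α * |x - 0| + (1 - α) * |x - 1|))))
        + ∫ x in Ioi 1, exp (-(v * (α * |x - 0| + (1 - α) * |x - 1|))) := by
    rw [← setIntegral_union (Ioc_disjoint_Ioi le_rfl) measurableSet_Ioi (r2dp_int2 hα hv)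
      (r2dp_int3 hα hv), Ioc_union_Ioi_eq_Ioi zero_le_one]
  have h1 : (∫ x in Iic 0, exp (-(v * (α * |x - 0| + (1 - α) * |x - 1|))))
      = exp ((α - 1) * v) / v := by
    rw [setIntegral_congr_fun measurableSet_Iic (r2dp_piece1 hα hv), integral_const_mul,
      r2dp_expIic hv, mul_zero, exp_zero, mul_one_div]
    ring_nf
  have h2 : (∫ x in Ioc 0 1, exp (-(v * (α * |x - 0| + (1 - α) * |x - 1|))))
      = (exp ((α - 1) * v) - exp (-(α * v))) / (v * (2 * α - 1)) := by
    rw [setIntegral_congr_fun measurableSet_Ioc (r2dp_piece2 hα hv), integral_const_mul,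
      ← intervalIntegral.integral_of_le zero_le_one]
    have key : (∫ x in (0:ℝ)..1, exp (-(v * (2 * α - 1)) * x))
        = (1 - exp (-(v * (2 * α - 1)))) / (v * (2 * α - 1)) := by
      rw [intervalIntegral.integral_comp_mul_left exp (neg_ne_zero.mpr hk.ne'),
        mul_zero, mul_one, integral_exp, smul_eq_mul, exp_zero]
      field_simp
      ring
    rw [key, mul_div_assoc', mul_sub, mul_one, ← exp_add]
    ring_nf
  have h3 : (∫ x in Ioi 1, exp (-(v * (α * |x - 0| + (1 - α) * |x - 1|))))
      = exp (-(α * v)) / v := by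
    rw [setIntegral_congr_fun measurableSet_Ioi (r2dp_piece3 hα hv), integral_const_mul,
      r2dp_expIoi hv, mul_one, mul_div_assoc', ← exp_add]
    ring_nf
  rw [← intervalIntegral.integral_Iic_add_Ioi (r2dp_int1 hα hv)
    ((r2dp_intAll hα hv).integrableOn), hsplit23, h1, h2, h3]
  ring

end r2dpAux

lemma r2dp_tangent {a r x : ℝ} (ha : 1 < a) (hr : 0 < r) (hx : 0 < x) :
    a * r ^ (a - 1) * x - (a - 1) * r ^ a ≤ x ^ a := by
  have hs : (-1:ℝ) ≤ x / r - 1 := by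
    have : 0 ≤ x / r := (div_pos hx hr).le
    linarith
  have h := one_add_mul_self_le_rpow_one_add hs ha.le
  rw [show (1 + (x / r - 1)) = x / r by ring] at h
  have h2 := mul_le_mul_of_nonneg_left h (rpow_pos_of_pos hr a).le
  rw [div_rpow hx.le hr.le, mul_div_cancel₀ _ (rpow_pos_of_pos hr a).ne'] at h2
  refine le_trans (le_of_eq ?_) h2
  have h5 : r ^ (a - 1) = r ^ a / r := by rw [rpow_sub hr, rpow_one]
  rw [h5]
  field_simp
  ring

lemma r2dp_tangent2 {a r c d : ℝ} (ha : 1 < a) (hr : 0 < r) (hc : 0 < c) (hd : 0 < d) :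
    a * r ^ (a - 1) * c - (a - 1) * r ^ a * d ≤ c ^ a * d ^ (1 - a) := by
  have h := mul_le_mul_of_nonneg_left (r2dp_tangent ha hr (div_pos hc hd)) hd.le
  have e1 : d * ((c / d) ^ a) = c ^ a * d ^ (1 - a) := by
    rw [div_rpow hc.le hd.le, show (1:ℝ) - a = 1 + (-a) by ring, rpow_add hd, rpow_one,
      rpow_neg hd.le]
    field_simp
  have e2 : d * (a * r ^ (a - 1) * (c / d) - (a - 1) * r ^ a)
      = a * r ^ (a - 1) * c - (a - 1) * r ^ a * d := by
    field_simp
  rw [e1, e2] at h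
  exact h

lemma r2dp_tangent_eq {a A B : ℝ} (hA : 0 < A) (hB : 0 < B) :
    a * (A / B) ^ (a - 1) * A - (a - 1) * (A / B) ^ a * B = A ^ a * B ^ (1 - a) := by
  rw [div_rpow hA.le hB.le, div_rpow hA.le hB.le, rpow_sub hA, rpow_sub hB, rpow_one, rpow_one,
    show (1:ℝ) - a = 1 + (-a) by ring, rpow_add hB, rpow_one, rpow_neg hB.le]
  have h1 := (rpow_pos_of_pos hA a).ne'
  have h2 := (rpow_pos_of_pos hB a).ne'
  field_simp
  ring

lemma r2dp_half_pull {A B : ℝ} (a : ℝ) (hA : 0 < A) (hB : 0 < B) :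
    ((1/2) * A) ^ a * ((1/2) * B) ^ (1 - a) = (1/2) * (A ^ a * B ^ (1 - a)) := by
  rw [mul_rpow (by norm_num) hA.le, mul_rpow (by norm_num) hB.le]
  have h : ((1:ℝ)/2) ^ a * ((1:ℝ)/2) ^ (1 - a) = 1/2 := by
    rw [← rpow_add (by norm_num : (0:ℝ) < 1/2)]
    norm_num
  calc ((1:ℝ)/2) ^ a * A ^ a * (((1:ℝ)/2) ^ (1-a) * B ^ (1-a))
      = (((1:ℝ)/2) ^ a * ((1:ℝ)/2) ^ (1 - a)) * (A ^ a * B ^ (1-a)) := by ring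
    _ = (1/2) * (A ^ a * B ^ (1 - a)) := by rw [h]

lemma r2dp_s_lb {a x : ℝ} (ha : 1 < a) (hx : x ≠ 0) :
    1 - a < a * |x - 0| + (1 - a) * |x - 1| := by
  have h1 : |x - 1| ≤ |x| + 1 := by
    calc |x - 1| ≤ |x| + |(1:ℝ)| := abs_sub x 1
      _ = |x| + 1 := by rw [abs_one]
  have h2 : 0 < |x| := abs_pos.mpr hx
  rw [sub_zero]
  nlinarith [abs_nonneg (x - 1)]

lemma r2dp_pow_combine {a w p q : ℝ} (hw : 0 < w) :
    (w * exp (-w * p)) ^ a * (w * exp (-w * q)) ^ (1 - a)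
      = w * exp (-(w * (a * p + (1 - a) * q))) := by
  rw [mul_rpow hw.le (exp_pos _).le, mul_rpow hw.le (exp_pos _).le, ← exp_mul, ← exp_mul,
    mul_mul_mul_comm, ← rpow_add hw, ← exp_add, show a + (1 - a) = (1:ℝ) by ring, rpow_one]
  congr 1
  ring


/-- The R²DP Laplace mechanism applied to a query of sensitivity 1 satisfies
`(α, ε)`-Rényi differential privacy with
`ε = (1/(α-1))·ln((α·M(α-1) + (α-1)·M(-α))/(2α-1))`, where `M` is the moment
generating function of `u = 1/b`; equivalently the Rényi integral between the output
densities at locations `0` and `1` is bounded by `(α·M(α-1) + (α-1)·M(-α))/(2α-1)`. -/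
theorem r2dp_renyi_dp {Ω : Type*} [MeasurableSpace Ω] (μ : Measure Ω)
    [IsProbabilityMeasure μ] (u : Ω → ℝ) (hu : Measurable u)
    (hupos : ∀ᵐ ω ∂μ, 0 < u ω) (α : ℝ) (hα : 1 < α)
    (hint : Integrable (fun ω => Real.exp ((α - 1) * u ω)) μ) :
    (∫ x : ℝ, ((1 / 2) * ∫ ω, u ω * Real.exp (-(u ω) * |x - 0|) ∂μ) ^ α *
        ((1 / 2) * ∫ ω, u ω * Real.exp (-(u ω) * |x - 1|) ∂μ) ^ (1 - α)) ≤
      (α * (∫ ω, Real.exp ((α - 1) * u ω) ∂μ) +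
          (α - 1) * (∫ ω, Real.exp (-α * u ω) ∂μ)) / (2 * α - 1) := by
  have hα0 : (0:ℝ) < α - 1 := by linarith
  have h2α : (0:ℝ) < 2 * α - 1 := by linarith
  have hu_int : Integrable u μ := by
    refine (hint.const_mul ((α-1)⁻¹)).mono' hu.aestronglyMeasurable ?_
    filter_upwards [hupos] with ω hω
    rw [norm_of_nonneg hω.le, inv_mul_eq_div, le_div_iff₀ hα0, mul_comm]
    linarith [add_one_le_exp ((α - 1) * u ω), exp_pos ((α - 1) * u ω)]
  have hexp_neg_int : Integrable (fun ω => exp (-α * u ω)) μ := by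
    refine (integrable_const (1:ℝ)).mono' ((hu.const_mul (-α)).exp).aestronglyMeasurable ?_
    filter_upwards [hupos] with ω hω
    rw [norm_of_nonneg (exp_pos _).le, exp_le_one_iff]
    nlinarith
  have hfm_int : ∀ c : ℝ, 0 ≤ c → Integrable (fun ω => u ω * exp (-(u ω) * c)) μ := by
    intro c hc
    refine hu_int.mono' ((hu.mul (((hu.neg).mul_const c).exp)).aestronglyMeasurable) ?_
    filter_upwards [hupos] with ω hω
    rw [norm_of_nonneg (by positivity)]
    calc u ω * exp (-(u ω) * c) ≤ u ω * 1 := by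
          refine mul_le_mul_of_nonneg_left ?_ hω.le
          rw [exp_le_one_iff]
          nlinarith
      _ = u ω := mul_one _
  have hpos : ∀ c : ℝ, 0 ≤ c → 0 < ∫ ω, u ω * exp (-(u ω) * c) ∂μ := by
    intro c hc
    have hnn : 0 ≤ᵐ[μ] fun ω => u ω * exp (-(u ω) * c) := by
      filter_upwards [hupos] with ω hω
      positivity
    rw [integral_pos_iff_support_of_nonneg_ae hnn (hfm_int c hc)]
    have hsub : {ω | 0 < u ω} ⊆ Function.support fun ω => u ω * exp (-(u ω) * c) := by
      intro ω hω
      exact (mul_pos hω (exp_pos _)).ne'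
    refine lt_of_lt_of_le ?_ (measure_mono hsub)
    have hup2 := hupos
    rw [ae_iff] at hup2
    have hle : μ univ ≤ μ {ω | 0 < u ω} + μ {a | ¬ 0 < u a} := by
      refine le_trans (measure_mono ?_) (measure_union_le _ _)
      intro ω _
      by_cases h : 0 < u ω
      · exact mem_union_left _ h
      · exact mem_union_right _ h
    rw [measure_univ, hup2, add_zero] at hle
    exact lt_of_lt_of_le zero_lt_one hle
  set G : Ω → ℝ := fun ω =>
    (α * exp ((α - 1) * u ω) + (α - 1) * exp (-α * u ω)) / (2 * α - 1) with hG_def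
  have hGint : Integrable G μ :=
    ((hint.const_mul α).add (hexp_neg_int.const_mul (α - 1))).div_const _
  set f : Ω → ℝ → ℝ := fun ω x =>
    (1/2) * (u ω * exp (-(u ω * (α * |x - 0| + (1 - α) * |x - 1|)))) with hf_def
  have hsm : Measurable (fun x : ℝ => α * |x - 0| + (1 - α) * |x - 1|) :=
    (Continuous.measurable (by continuity))
  have hFm : Measurable (Function.uncurry f) := by
    refine Measurable.const_mul ?_ (1/2)
    exact (hu.comp measurable_fst).mul
      ((((hu.comp measurable_fst).mul (hsm.comp measurable_snd)).neg).exp)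
  have value_ae : ∀ᵐ ω ∂μ, (∫ x : ℝ, f ω x) = G ω := by
    filter_upwards [hupos] with ω hω
    simp only [hf_def, hG_def]
    rw [integral_const_mul, integral_const_mul, r2dp_intVal hα hω]
    simp only [neg_mul]
    field_simp
    ring
  have hFint : Integrable (Function.uncurry f) (μ.prod volume) := by
    refine (integrable_prod_iff hFm.aestronglyMeasurable).mpr ⟨?_, ?_⟩
    · filter_upwards [hupos] with ω hω
      exact (((r2dp_intAll hα hω).const_mul (u ω)).const_mul (1/2))
    · refine hGint.congr ?_
      filter_upwards [hupos, value_ae] with ω hω hval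
      rw [← hval]
      refine integral_congr_ae (Filter.Eventually.of_forall fun x => ?_)
      refine (norm_of_nonneg ?_).symm
      simp only [hf_def]
      have h1 := (exp_pos (-(u ω * (α * |x - 0| + (1 - α) * |x - 1|)))).le
      nlinarith [hω.le]
  have hHint : Integrable (fun x => ∫ ω, f ω x ∂μ) volume := hFint.integral_prod_right
  have hae : ∀ᵐ x : ℝ,
      ((1 / 2) * ∫ ω, u ω * exp (-(u ω) * |x - 0|) ∂μ) ^ α *
        ((1 / 2) * ∫ ω, u ω * exp (-(u ω) * |x - 1|) ∂μ) ^ (1 - α)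
        ≤ ∫ ω, f ω x ∂μ := by
    have h0 : ∀ᵐ x : ℝ, x ≠ (0:ℝ) := by
      rw [ae_iff]
      simpa using Real.volume_singleton (a := 0)
    filter_upwards [h0] with x hx
    set A := ∫ ω, u ω * exp (-(u ω) * |x - 0|) ∂μ with hA_def
    set B := ∫ ω, u ω * exp (-(u ω) * |x - 1|) ∂μ with hB_def
    have hA : 0 < A := hpos _ (abs_nonneg _)
    have hB : 0 < B := hpos _ (abs_nonneg _)
    have hr : 0 < A / B := div_pos hA hB
    have h0i := hfm_int (|x - 0|) (abs_nonneg _)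
    have h1i := hfm_int (|x - 1|) (abs_nonneg _)
    have hIx : Integrable (fun ω =>
        u ω * exp (-(u ω * (α * |x - 0| + (1 - α) * |x - 1|)))) μ := by
      set sx := α * |x - 0| + (1 - α) * |x - 1| with hsx_def
      have hδ : 0 < sx - (1 - α) := by
        have := r2dp_s_lb hα hx
        simp only [hsx_def]
        linarith
      refine (hint.const_mul ((sx - (1 - α))⁻¹)).mono'
        ((hu.mul (((hu.mul_const sx).neg).exp)).aestronglyMeasurable) ?_
      filter_upwards [hupos] with ω hω
      rw [norm_of_nonneg (by positivity)]
      have harg : -(u ω * sx) = (-(u ω * (sx - (1 - α)))) + ((α - 1) * u ω) := by ring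
      rw [harg, exp_add, ← mul_assoc]
      refine mul_le_mul_of_nonneg_right ?_ (exp_pos _).le
      rw [exp_neg, ← div_eq_mul_inv, div_le_iff₀ (exp_pos _), inv_mul_eq_div, le_div_iff₀ hδ]
      linarith [add_one_le_exp (u ω * (sx - (1 - α)))]
    have hptw : ∀ᵐ ω ∂μ,
        α * (A / B) ^ (α - 1) * (u ω * exp (-(u ω) * |x - 0|))
          - (α - 1) * (A / B) ^ α * (u ω * exp (-(u ω) * |x - 1|))
        ≤ u ω * exp (-(u ω * (α * |x - 0| + (1 - α) * |x - 1|))) := by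
      filter_upwards [hupos] with ω hω
      have hc : 0 < u ω * exp (-(u ω) * |x - 0|) := by positivity
      have hd : 0 < u ω * exp (-(u ω) * |x - 1|) := by positivity
      have h := r2dp_tangent2 hα hr hc hd
      rwa [r2dp_pow_combine hω] at h
    have hmono := integral_mono_ae ((h0i.const_mul _).sub (h1i.const_mul _)) hIx hptw
    have hlin : ∫ ω, (α * (A / B) ^ (α - 1) * (u ω * exp (-(u ω) * |x - 0|))
          - (α - 1) * (A / B) ^ α * (u ω * exp (-(u ω) * |x - 1|))) ∂μ
        = α * (A / B) ^ (α - 1) * A - (α - 1) * (A / B) ^ α * B := by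
      rw [integral_sub (h0i.const_mul _) (h1i.const_mul _), integral_const_mul, integral_const_mul]
    simp only [Pi.sub_apply] at hmono
    rw [hlin] at hmono
    calc ((1/2) * A) ^ α * ((1/2) * B) ^ (1 - α)
        = (1/2) * (A ^ α * B ^ (1 - α)) := r2dp_half_pull α hA hB
      _ = (1/2) * (α * (A / B) ^ (α - 1) * A - (α - 1) * (A / B) ^ α * B) := by
          rw [r2dp_tangent_eq hA hB]
      _ ≤ (1/2) * ∫ ω, u ω * exp (-(u ω * (α * |x - 0| + (1 - α) * |x - 1|))) ∂μ := by
          linarith [hmono]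
      _ = ∫ ω, f ω x ∂μ := by
          simp only [hf_def]
          rw [integral_const_mul]
  have hnn : 0 ≤ᵐ[volume] fun x : ℝ =>
      ((1 / 2) * ∫ ω, u ω * exp (-(u ω) * |x - 0|) ∂μ) ^ α *
        ((1 / 2) * ∫ ω, u ω * exp (-(u ω) * |x - 1|) ∂μ) ^ (1 - α) := by
    refine Filter.Eventually.of_forall fun x => ?_
    have h1 := hpos (|x - 0|) (abs_nonneg _)
    have h2 := hpos (|x - 1|) (abs_nonneg _)
    exact mul_nonneg (rpow_nonneg (by linarith) _) (rpow_nonneg (by linarith) _)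
  refine le_trans (integral_mono_of_nonneg hnn hHint hae) (le_of_eq ?_)
  rw [(integral_integral_swap hFint).symm]
  rw [integral_congr_ae value_ae]
  simp only [hG_def]
  rw [integral_div, integral_add (hint.const_mul α) (hexp_neg_int.const_mul (α - 1)),
    integral_const_mul, integral_const_mul]
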